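/- Let (X, 𝒜) be a measurable space, let μ and ν be measures on X, let B and B′ be measurable subsets of X with B ⊆ B′ and 0 < ν(B) < ∞, let A ⊆ B′ be measurable, and let u : X → ℝ be measurable with ∫_B |u| dν < ∞. Set m := ν(B)^{−1} ∫_B u dν. Then ∫_A |u(x) − m|² dμ(x) ≤ ν(B)^{−1} ∬_{B′×B′} |u(x) − u(y)|² dμ(x) dν(y). -/

import Mathlib

open MeasureTheory
open scoped ENNReal

/-- **Cauchy–Schwarz mean-oscillation bound**: let `μ, ν` be measures on `X`, let
`B ⊆ B′` with `0 < ν(B) < ∞`, let `A ⊆ B′`, let `u` be measurable with `∫_B |u| dν < ∞`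
and let `m` be the `ν`-average of `u` over `B`. Then
`∫_A |u(x) − m|² dμ(x) ≤ ν(B)⁻¹ ∬_{B′×B′} |u(x) − u(y)|² dμ(x) dν(y)`. -/
theorem mean_oscillation_bound {X : Type*} [MeasurableSpace X] (μ ν : Measure X)
    (B B' A : Set X) (hBmeas : MeasurableSet B) (hB'meas : MeasurableSet B')
    (hAmeas : MeasurableSet A) (hBB' : B ⊆ B') (hAB' : A ⊆ B')
    (hν0 : 0 < ν B) (hνfin : ν B < ⊤)
    (u : X → ℝ) (hu : Measurable u) (hint : IntegrableOn u B ν)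
    (m : ℝ) (hm : m = (ν B).toReal⁻¹ * ∫ x in B, u x ∂ν) :
    ∫⁻ x in A, ENNReal.ofReal ((u x - m) ^ 2) ∂μ ≤
      (ν B)⁻¹ * ∫⁻ x in B', ∫⁻ y in B', ENNReal.ofReal ((u x - u y) ^ 2) ∂ν ∂μ := by
  set C : ℝ≥0∞ := ν B with hC
  have hC0 : C ≠ 0 := hν0.ne'
  have hCt : C ≠ ⊤ := hνfin.ne
  have hCtR : 0 < C.toReal := ENNReal.toReal_pos hC0 hCt
  -- pointwise bound
  have key : ∀ x : X, ENNReal.ofReal ((u x - m) ^ 2) ≤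
      C⁻¹ * ∫⁻ y in B, ENNReal.ofReal ((u x - u y) ^ 2) ∂ν := by
    intro x
    set f : X → ℝ≥0∞ := fun y => ENNReal.ofReal |u x - u y| with hf
    have hfm : Measurable f := by
      apply Measurable.ennreal_ofReal
      exact (measurable_const.sub hu).abs
    set L : ℝ≥0∞ := ∫⁻ y in B, f y ∂ν with hL
    set I : ℝ≥0∞ := ∫⁻ y in B, f y ^ (2:ℝ) ∂ν with hI
    -- Step 1: ofReal |u x - m| ≤ C⁻¹ * L
    have hsub : IntegrableOn (fun y => u x - u y) B ν := by
      apply Integrable.sub _ hint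
      exact integrableOn_const hνfin.ne
    have hval : u x - m = (C.toReal)⁻¹ * ∫ y in B, (u x - u y) ∂ν := by
      rw [integral_sub (integrableOn_const (C := u x) hνfin.ne) hint,
        setIntegral_const, hm, smul_eq_mul, measureReal_def, ← hC]
      field_simp
    have step1 : ENNReal.ofReal |u x - m| ≤ C⁻¹ * L := by
      rw [hval, abs_mul, abs_of_nonneg (inv_nonneg.2 hCtR.le), ENNReal.ofReal_mul (inv_nonneg.2 hCtR.le)]
      have h1 : ENNReal.ofReal (C.toReal)⁻¹ = C⁻¹ := by
        rw [ENNReal.ofReal_inv_of_pos hCtR, ENNReal.ofReal_toReal hCt]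
      rw [h1]
      apply mul_le_mul_right _ _
      calc ENNReal.ofReal |∫ y in B, (u x - u y) ∂ν|
          = (‖∫ y in B, (u x - u y) ∂ν‖ₑ : ℝ≥0∞) := (Real.enorm_eq_ofReal_abs _).symm
        _ ≤ ∫⁻ y in B, (‖u x - u y‖ₑ : ℝ≥0∞) ∂ν := enorm_integral_le_lintegral_enorm _
        _ = L := by simp only [hL, hf, Real.enorm_eq_ofReal_abs]
    -- Step 2: L ^ 2 ≤ C * I  (Cauchy–Schwarz)
    have step2 : L ^ (2:ℝ) ≤ I * C := by
      have hcs := ENNReal.lintegral_mul_le_Lp_mul_Lq (ν.restrict B)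
        (Real.HolderConjugate.two_two : Real.HolderConjugate 2 2) hfm.aemeasurable
        (aemeasurable_const : AEMeasurable (fun _ : X => (1:ℝ≥0∞)) _)
      simp only [mul_one, Pi.mul_apply, ENNReal.one_rpow, lintegral_one,
        Measure.restrict_apply_univ] at hcs
      calc L ^ (2:ℝ) ≤ (I ^ (1/2:ℝ) * C ^ (1/2:ℝ)) ^ (2:ℝ) := by
            exact ENNReal.rpow_le_rpow hcs (by norm_num)
        _ = I * C := by
            rw [ENNReal.mul_rpow_of_nonneg _ _ (by norm_num : (0:ℝ) ≤ 2),
              ← ENNReal.rpow_mul, ← ENNReal.rpow_mul]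
            norm_num
    -- combine
    have habs : ENNReal.ofReal ((u x - m) ^ 2) = (ENNReal.ofReal |u x - m|) ^ (2:ℝ) := by
      rw [ENNReal.ofReal_rpow_of_nonneg (abs_nonneg _) (by norm_num),
        Real.rpow_two, sq_abs]
    have hfy : ∀ y, f y ^ (2:ℝ) = ENNReal.ofReal ((u x - u y) ^ 2) := by
      intro y
      rw [hf, ENNReal.ofReal_rpow_of_nonneg (abs_nonneg _) (by norm_num),
        Real.rpow_two, sq_abs]
    calc ENNReal.ofReal ((u x - m) ^ 2) = (ENNReal.ofReal |u x - m|) ^ (2:ℝ) := habs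
      _ ≤ (C⁻¹ * L) ^ (2:ℝ) := ENNReal.rpow_le_rpow step1 (by norm_num)
      _ = C⁻¹ ^ (2:ℝ) * L ^ (2:ℝ) := ENNReal.mul_rpow_of_nonneg _ _ (by norm_num)
      _ ≤ C⁻¹ ^ (2:ℝ) * (I * C) := mul_le_mul_right step2 _
      _ = C⁻¹ * I := by
          rw [show (2:ℝ) = ((2:ℕ):ℝ) by norm_num, ENNReal.rpow_natCast]
          rw [pow_two, mul_assoc, mul_comm I C, ← mul_assoc C⁻¹ C I,
            ENNReal.inv_mul_cancel hC0 hCt, one_mul]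
      _ = C⁻¹ * ∫⁻ y in B, ENNReal.ofReal ((u x - u y) ^ 2) ∂ν := by
          simp_rw [hI, hfy]
  -- integrate the pointwise bound
  calc ∫⁻ x in A, ENNReal.ofReal ((u x - m) ^ 2) ∂μ
      ≤ ∫⁻ x in A, C⁻¹ * ∫⁻ y in B, ENNReal.ofReal ((u x - u y) ^ 2) ∂ν ∂μ :=
        lintegral_mono fun x => key x
    _ = C⁻¹ * ∫⁻ x in A, ∫⁻ y in B, ENNReal.ofReal ((u x - u y) ^ 2) ∂ν ∂μ :=
        lintegral_const_mul' _ _ (by simp [hCt, hC0])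
    _ ≤ C⁻¹ * ∫⁻ x in B', ∫⁻ y in B', ENNReal.ofReal ((u x - u y) ^ 2) ∂ν ∂μ := by
        apply mul_le_mul_right
        calc ∫⁻ x in A, ∫⁻ y in B, ENNReal.ofReal ((u x - u y) ^ 2) ∂ν ∂μ
            ≤ ∫⁻ x in A, ∫⁻ y in B', ENNReal.ofReal ((u x - u y) ^ 2) ∂ν ∂μ :=
              lintegral_mono fun x => lintegral_mono_set hBB'
          _ ≤ ∫⁻ x in B', ∫⁻ y in B', ENNReal.ofReal ((u x - u y) ^ 2) ∂ν ∂μ :=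
              lintegral_mono_set hAB'
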